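/- arXiv:1310.1041 — 7 statements merged into one kernel-verified Lean document; each statement's English description precedes it below -/
import Mathlib

section
/- Let b = (1 - e^{-1})^{-1}. Suppose k₀ ≥ b is a real number and (q_n)_{n≥0} is a sequence of nonnegative real numbers satisfying q₀ ≤ e^{-k₀} and, for every n ≥ 0, q_{n+1} ≤ q_n² + exp(-2^{n+1}·(√n + √k₀)²). Then q_n ≤ exp(-(k₀ - b)·2^n) for all n ≥ 0. -/
/-- Analytic core of Proposition 3.2: propagation of the recursive bounds
`q_{n+1} ≤ q_n² + exp(-2^{n+1}(√n + √k₀)²)` along the renormalization scheme,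
where `b = (1 - e⁻¹)⁻¹`. -/
theorem stmt0 (k₀ : ℝ) (q : ℕ → ℝ)
    (hk₀ : (1 - Real.exp (-1))⁻¹ ≤ k₀)
    (hq : ∀ n, 0 ≤ q n)
    (h0 : q 0 ≤ Real.exp (-k₀))
    (hrec : ∀ n : ℕ, q (n + 1) ≤ (q n) ^ 2 +
      Real.exp (-(2 ^ (n + 1) * (Real.sqrt n + Real.sqrt k₀) ^ 2))) :
    ∀ n : ℕ, q n ≤ Real.exp (-((k₀ - (1 - Real.exp (-1))⁻¹) * 2 ^ n)) := by
  have hb : (0:ℝ) < 1 - Real.exp (-1) := by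
    have h1 : Real.exp (-1) < 1 := Real.exp_lt_one_iff.mpr (by norm_num)
    linarith
  have hbge1 : (1:ℝ) ≤ (1 - Real.exp (-1))⁻¹ := by
    rw [le_inv_comm₀ one_pos hb]
    have := (Real.exp_pos (-1)).le
    linarith
  have hk1 : (1:ℝ) ≤ k₀ := le_trans hbge1 hk₀
  have hlog2 : Real.log 2 ≤ 1 := by
    have := Real.log_le_sub_one_of_pos (by norm_num : (0:ℝ) < 2)
    linarith
  have hlog2pos : 0 < Real.log 2 := Real.log_pos (by norm_num)
  set c : ℕ → ℝ := fun n => Real.log 2 - Real.log 2 / 2 ^ n with hc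
  have hcnonneg : ∀ n, 0 ≤ c n := by
    intro n
    have h2 : (1:ℝ) ≤ 2 ^ n := one_le_pow₀ (by norm_num)
    have : Real.log 2 / 2 ^ n ≤ Real.log 2 / 1 :=
      div_le_div_of_nonneg_left hlog2pos.le one_pos h2
    simp only [hc]
    simp [div_one] at this
    linarith
  have hcle : ∀ n, c n ≤ Real.log 2 := by
    intro n
    have hp : (0:ℝ) < 2 ^ n := by positivity
    have : 0 ≤ Real.log 2 / 2 ^ n := by positivity
    simp only [hc]; linarith
  have aux : ∀ n, q n ≤ Real.exp (-((k₀ - c n) * 2 ^ n)) := by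
    intro n
    induction n with
    | zero =>
      simpa [hc] using h0
    | succ n ih =>
      have hsq : q n ^ 2 ≤ Real.exp (-((k₀ - c n) * 2 ^ n)) ^ 2 :=
        pow_le_pow_left₀ (hq n) ih 2
      have hsq' : Real.exp (-((k₀ - c n) * 2 ^ n)) ^ 2
          = Real.exp (-((k₀ - c n) * 2 ^ (n+1))) := by
        rw [← Real.exp_nat_mul]
        ring_nf
      have hsqrt : (k₀ : ℝ) ≤ (Real.sqrt n + Real.sqrt k₀) ^ 2 := by
        have h1 : Real.sqrt k₀ ≤ Real.sqrt n + Real.sqrt k₀ := by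
          have := Real.sqrt_nonneg (n:ℝ); linarith
        have h2 : Real.sqrt k₀ ^ 2 ≤ (Real.sqrt n + Real.sqrt k₀) ^ 2 :=
          pow_le_pow_left₀ (Real.sqrt_nonneg _) h1 2
        rwa [Real.sq_sqrt (by linarith : (0:ℝ) ≤ k₀)] at h2
      have herr : Real.exp (-(2 ^ (n + 1) * (Real.sqrt n + Real.sqrt k₀) ^ 2))
          ≤ Real.exp (-((k₀ - c n) * 2 ^ (n+1))) := by
        apply Real.exp_le_exp.mpr
        have hp : (0:ℝ) < 2 ^ (n+1) := by positivity
        have hc0 := hcnonneg n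
        nlinarith
      have hstep := hrec n
      have hsum : q (n+1) ≤ 2 * Real.exp (-((k₀ - c n) * 2 ^ (n+1))) := by
        calc q (n+1) ≤ q n ^ 2 + Real.exp (-(2 ^ (n + 1) * (Real.sqrt n + Real.sqrt k₀) ^ 2)) := hstep
        _ ≤ Real.exp (-((k₀ - c n) * 2 ^ (n+1))) + Real.exp (-((k₀ - c n) * 2 ^ (n+1))) := by
            rw [hsq'] at hsq; linarith
        _ = 2 * Real.exp (-((k₀ - c n) * 2 ^ (n+1))) := by ring
      have hfinal : 2 * Real.exp (-((k₀ - c n) * 2 ^ (n+1)))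
          = Real.exp (-((k₀ - c (n+1)) * 2 ^ (n+1))) := by
        have hexp : -((k₀ - c (n+1)) * 2 ^ (n+1))
            = Real.log 2 + -((k₀ - c n) * 2 ^ (n+1)) := by
          have hp : (2:ℝ) ^ (n+1) ≠ 0 := by positivity
          simp only [hc]
          field_simp
          ring
        rw [hexp, Real.exp_add, Real.exp_log (by norm_num : (0:ℝ) < 2)]
      linarith [hsum, hfinal.le]
  intro n
  have := aux n
  have hmono : Real.exp (-((k₀ - c n) * 2 ^ n))
      ≤ Real.exp (-((k₀ - (1 - Real.exp (-1))⁻¹) * 2 ^ n)) := by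
    apply Real.exp_le_exp.mpr
    have hp : (0:ℝ) ≤ 2 ^ n := by positivity
    have : c n ≤ (1 - Real.exp (-1))⁻¹ := le_trans (hcle n) (le_trans hlog2 hbge1)
    nlinarith
  linarith
end

section
/- Let ε > 0 and c ≥ 1 be real numbers, let (l_n)_{n≥0} be a sequence of reals with l_n ≥ 1, and let (δ_n)_{n≥0}, (ε_n)_{n≥0} be sequences of nonnegative reals such that: (i) Σ_{n≥0} δ_n ≤ ε; (ii) 2·c·l_n^{-4}·l_{n+1}³ ≤ 1 for all n ≥ 0; (iii) c·l_n²·ε_n ≤ (2·l_{n+1}³)^{-1} for all n ≥ 0. Let q_n : ℝ → [0, ∞), n ≥ 0, be nondecreasing functions satisfying q_{n+1}(h') ≤ c·l_n²·(q_n(h' + δ_n)² + ε_n) for every n ≥ 0 and every h' ∈ ℝ. If h ∈ ℝ is such that q₀(h + ε) ≤ l₀^{-3}, then q_n(h) ≤ l_n^{-3} for all n ≥ 0. -/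
/-- Analytic core of Lemma 4.2: propagation of the recursive bounds
`q_{n+1}(h') ≤ c l_n² (q_n(h' + δ_n)² + ε_n)` for the nondecreasing functions `q_n`,
under the stated summability and compatibility conditions. -/
theorem stmt1 (ε c : ℝ) (hε : 0 < ε) (hc : 1 ≤ c)
    (l δ e : ℕ → ℝ)
    (hl : ∀ n, 1 ≤ l n) (hδ : ∀ n, 0 ≤ δ n) (he : ∀ n, 0 ≤ e n)
    (hδsum : Summable δ) (hδε : ∑' n, δ n ≤ ε)
    (hll : ∀ n, 2 * c * ((l n) ^ 4)⁻¹ * (l (n + 1)) ^ 3 ≤ 1)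
    (hee : ∀ n, c * (l n) ^ 2 * e n ≤ (2 * (l (n + 1)) ^ 3)⁻¹)
    (q : ℕ → ℝ → ℝ)
    (hq0 : ∀ n h, 0 ≤ q n h)
    (hmono : ∀ n, Monotone (q n))
    (hrec : ∀ n h', q (n + 1) h' ≤ c * (l n) ^ 2 * ((q n (h' + δ n)) ^ 2 + e n))
    (h : ℝ) (hseed : q 0 (h + ε) ≤ ((l 0) ^ 3)⁻¹) :
    ∀ n, q n h ≤ ((l n) ^ 3)⁻¹ := by
  have key : ∀ n, q n (h + ε - ∑ k ∈ Finset.range n, δ k) ≤ ((l n) ^ 3)⁻¹ := by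
    intro n
    induction n with
    | zero => simpa using hseed
    | succ n ih =>
      have harg : h + ε - ∑ k ∈ Finset.range (n + 1), δ k + δ n
          = h + ε - ∑ k ∈ Finset.range n, δ k := by
        rw [Finset.sum_range_succ]; ring
      have h1 := hrec n (h + ε - ∑ k ∈ Finset.range (n + 1), δ k)
      rw [harg] at h1
      have hqn := hq0 n (h + ε - ∑ k ∈ Finset.range n, δ k)
      have hsq : (q n (h + ε - ∑ k ∈ Finset.range n, δ k)) ^ 2 ≤ (((l n) ^ 3)⁻¹) ^ 2 :=
        pow_le_pow_left₀ hqn ih 2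
      have hln := hl n
      have hln1 := hl (n + 1)
      have hlnpos : (0:ℝ) < l n := lt_of_lt_of_le one_pos hln
      have hln1pos : (0:ℝ) < l (n + 1) := lt_of_lt_of_le one_pos hln1
      have hA : c * (l n) ^ 2 * (((l n) ^ 3)⁻¹) ^ 2 ≤ (2 * (l (n + 1)) ^ 3)⁻¹ := by
        have h2 := hll n
        have h4 : (0:ℝ) < (l n) ^ 4 := by positivity
        have h3 : (0:ℝ) < (l (n + 1)) ^ 3 := by positivity
        rw [inv_pow, ← pow_mul]
        have : c * (l n) ^ 2 * ((l n) ^ 6)⁻¹ = c * ((l n) ^ 4)⁻¹ := by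
          field_simp
        rw [this, inv_eq_one_div (2 * (l (n + 1)) ^ 3), le_div_iff₀ (by positivity)]
        nlinarith
      have hB := hee n
      calc q (n + 1) (h + ε - ∑ k ∈ Finset.range (n + 1), δ k)
          ≤ c * (l n) ^ 2 * ((q n (h + ε - ∑ k ∈ Finset.range n, δ k)) ^ 2 + e n) := h1
        _ ≤ c * (l n) ^ 2 * ((((l n) ^ 3)⁻¹) ^ 2 + e n) := by
            have hcl : (0:ℝ) ≤ c * (l n) ^ 2 := by positivity
            apply mul_le_mul_of_nonneg_left _ hcl
            linarith
        _ = c * (l n) ^ 2 * (((l n) ^ 3)⁻¹) ^ 2 + c * (l n) ^ 2 * e n := by ring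
        _ ≤ (2 * (l (n + 1)) ^ 3)⁻¹ + (2 * (l (n + 1)) ^ 3)⁻¹ := by linarith
        _ = ((l (n + 1)) ^ 3)⁻¹ := by
            rw [mul_inv]; ring
  intro n
  have hsum_le : ∑ k ∈ Finset.range n, δ k ≤ ε := by
    calc ∑ k ∈ Finset.range n, δ k ≤ ∑' k, δ k := Summable.sum_le_tsum _ (fun k _ => hδ k) hδsum
      _ ≤ ε := hδε
  have : h ≤ h + ε - ∑ k ∈ Finset.range n, δ k := by linarith
  exact le_trans (hmono n this) (key n)
end

section
/- Let d ≥ 3 be an integer and let K ⊆ {0,1}^d. Suppose C ⊆ K and D ⊆ K are nonempty sets such that the closure of C in H = {0,1}^d and the closure of D in H each have cardinality at least (1 - d^{-2})·2^d. Then there exist x ∈ C and y ∈ D that are joined by a path of the hypercube graph all of whose vertices lie in K; in particular, C and D lie in the same connected component of the subgraph induced on K. -/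
/-- The hypercube graph on `{0,1}^d`: two vertices are adjacent iff they differ in
exactly one coordinate. -/
def hypercubeGraph (d : ℕ) : SimpleGraph (Fin d → Bool) where
  Adj x y := ∃! i, x i ≠ y i
  symm := by
    constructor
    rintro x y ⟨i, hi, hu⟩
    exact ⟨i, Ne.symm hi, fun j hj => hu j (Ne.symm hj)⟩
  loopless := by
    constructor
    rintro x ⟨i, hi, -⟩
    exact hi rfl

/-- The closure of `C` in the hypercube: `C` together with all vertices adjacent to `C`. -/
def hcClosure (d : ℕ) (C : Set (Fin d → Bool)) : Set (Fin d → Bool) :=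
  C ∪ {v | ∃ u ∈ C, (hypercubeGraph d).Adj u v}

lemma my_ncard_biUnion_le {α ι : Type*} [Finite α] (s : Finset ι) (f : ι → Set α) :
    (⋃ i ∈ s, f i).ncard ≤ ∑ i ∈ s, (f i).ncard := by
  classical
  induction s using Finset.induction_on with
  | empty => simp
  | insert a s hni ih =>
    rw [Finset.set_biUnion_insert, Finset.sum_insert hni]
    exact le_trans (Set.ncard_union_le _ _) (Nat.add_le_add_left ih _)

lemma hcClosure_card_le (d : ℕ) (D : Set (Fin d → Bool)) :
    (hcClosure d D).ncard ≤ (d + 1) * D.ncard := by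
  classical
  have hsub : hcClosure d D ⊆ D ∪ ⋃ i ∈ (Finset.univ : Finset (Fin d)),
      (fun u => Function.update u i (!u i)) '' D := by
    rintro v (hv | ⟨u, hu, i, hi, huniq⟩)
    · exact Or.inl hv
    · refine Or.inr (Set.mem_biUnion (Finset.mem_univ i) ⟨u, hu, ?_⟩)
      funext j
      by_cases hj : j = i
      · subst hj
        simp only [Function.update_self]
        cases hvj : v j <;> cases huj : u j <;> simp_all
      · have huvj : u j = v j := by
          by_contra hne
          exact hj (huniq j hne)
        show Function.update u i (!u i) j = v j
        rw [Function.update_of_ne hj]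
        exact huvj
  calc (hcClosure d D).ncard ≤ (D ∪ ⋃ i ∈ (Finset.univ : Finset (Fin d)),
        (fun u => Function.update u i (!u i)) '' D).ncard :=
        Set.ncard_le_ncard hsub (Set.toFinite _)
    _ ≤ D.ncard + (⋃ i ∈ (Finset.univ : Finset (Fin d)),
        (fun u => Function.update u i (!u i)) '' D).ncard :=
        Set.ncard_union_le _ _
    _ ≤ D.ncard + ∑ _i ∈ (Finset.univ : Finset (Fin d)), D.ncard := by
        refine Nat.add_le_add_left (le_trans (my_ncard_biUnion_le _ _) ?_) _
        exact Finset.sum_le_sum fun i _ => Set.ncard_image_le (Set.toFinite _)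
    _ = (d + 1) * D.ncard := by
        rw [Finset.sum_const, Finset.card_univ, Fintype.card_fin]
        ring

/-- Uniqueness of the giant component: two subsets of `K ⊆ {0,1}^d` whose closures each
contain at least `(1 - d⁻²)2^d` vertices are joined by a path inside `K`. -/
theorem stmt6 (d : ℕ) (hd : 3 ≤ d) (K C D : Set (Fin d → Bool))
    (hC : C ⊆ K) (hD : D ⊆ K) (hCne : C.Nonempty) (hDne : D.Nonempty)
    (hCclos : (1 - ((d : ℝ) ^ 2)⁻¹) * 2 ^ d ≤ ((hcClosure d C).ncard : ℝ))
    (hDclos : (1 - ((d : ℝ) ^ 2)⁻¹) * 2 ^ d ≤ ((hcClosure d D).ncard : ℝ)) :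
    ∃ x ∈ C, ∃ y ∈ D, ∃ (hx : x ∈ K) (hy : y ∈ K),
      (SimpleGraph.induce K (hypercubeGraph d)).Reachable ⟨x, hx⟩ ⟨y, hy⟩ := by
  by_cases h : ∃ x ∈ C, ∃ y ∈ D, x = y ∨ (hypercubeGraph d).Adj x y
  · obtain ⟨x, hx, y, hy, hxy⟩ := h
    refine ⟨x, hx, y, hy, hC hx, hD hy, ?_⟩
    rcases hxy with rfl | hadj
    · rfl
    · exact (SimpleGraph.Adj.reachable (by exact hadj))
  · exfalso
    push_neg at h
    -- closure C is disjoint from D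
    have hdisj : Disjoint (hcClosure d C) D := by
      rw [Set.disjoint_left]
      rintro w (hw | ⟨u, hu, hadj⟩) hwD
      · exact (h w hw w hwD).1 rfl
      · exact (h u hu w hwD).2 hadj
    have hN : (hcClosure d C).ncard + D.ncard ≤ 2 ^ d := by
      rw [← Set.ncard_union_eq hdisj (Set.toFinite _) (Set.toFinite _)]
      calc (hcClosure d C ∪ D).ncard ≤ (Set.univ : Set (Fin d → Bool)).ncard :=
            Set.ncard_le_ncard (Set.subset_univ _) (Set.toFinite _)
        _ = 2 ^ d := by
            rw [Set.ncard_univ, Nat.card_eq_fintype_card]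
            simp
    have hDc := hcClosure_card_le d D
    -- real arithmetic
    have hd3 : (3 : ℝ) ≤ d := by exact_mod_cast hd
    have hd2 : (0 : ℝ) < (d : ℝ) ^ 2 := by positivity
    have hNpos : (0 : ℝ) < 2 ^ d := by positivity
    have h1 : ((hcClosure d C).ncard : ℝ) + (D.ncard : ℝ) ≤ 2 ^ d := by
      exact_mod_cast hN
    have h2 : ((hcClosure d D).ncard : ℝ) ≤ ((d : ℝ) + 1) * D.ncard := by
      exact_mod_cast hDc
    have hinv : ((d : ℝ) ^ 2)⁻¹ * (d : ℝ) ^ 2 = 1 := inv_mul_cancel₀ (ne_of_gt hd2)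
    nlinarith [hCclos, hDclos, mul_pos hNpos hd2, sq_nonneg ((d:ℝ) - 3)]
end

section
/- Let d ≥ 1 and let L₀, l be positive integers with l ≥ 4; set L = l·L₀. Suppose E ⊆ ℤ^d is such that there is a nearest-neighbor path with all its vertices in E whose first vertex lies in B_∞(0, L) and whose last vertex lies in S_∞(0, 3L). Then there exist x₁ ∈ L₀·ℤ^d with |x₁|_∞ = L and x₂ ∈ L₀·ℤ^d with |x₂|_∞ = 2L such that for each i ∈ {1, 2} there is a nearest-neighbor path with all its vertices in E whose first vertex lies in B_∞(x_i, L₀) and whose last vertex lies in S_∞(x_i, 3L₀). -/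
/-- The `ℓ^∞`-norm of a point of `ℤ^d`. -/
def normInf {d : ℕ} (x : Fin d → ℤ) : ℕ := Finset.univ.sup fun i => (x i).natAbs

/-- The `ℓ¹`-norm of a point of `ℤ^d`. -/
def norm1 {d : ℕ} (x : Fin d → ℤ) : ℕ := ∑ i, (x i).natAbs

/-- `p 0, p 1, …, p n` is a nearest-neighbor path all of whose vertices lie in `E`. -/
def IsNNPathIn {d : ℕ} (E : Set (Fin d → ℤ)) (p : ℕ → (Fin d → ℤ)) (n : ℕ) : Prop :=
  (∀ i < n, norm1 (p (i + 1) - p i) = 1) ∧ ∀ i ≤ n, p i ∈ E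

lemma le_normInf {d : ℕ} (x : Fin d → ℤ) (i : Fin d) : (x i).natAbs ≤ normInf x :=
  Finset.le_sup (f := fun j => (x j).natAbs) (Finset.mem_univ i)

lemma normInf_le_norm1 {d : ℕ} (x : Fin d → ℤ) : normInf x ≤ norm1 x := by
  refine Finset.sup_le fun i _ => ?_
  exact Finset.single_le_sum (f := fun j => (x j).natAbs) (fun j _ => Nat.zero_le _) (Finset.mem_univ i)

lemma normInf_add_le {d : ℕ} (x y : Fin d → ℤ) : normInf (x + y) ≤ normInf x + normInf y := by
  refine Finset.sup_le fun i _ => ?_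
  calc ((x + y) i).natAbs ≤ (x i).natAbs + (y i).natAbs := by
        simp only [Pi.add_apply]; exact Int.natAbs_add_le _ _
    _ ≤ normInf x + normInf y := Nat.add_le_add (le_normInf x i) (le_normInf y i)

/-- Discrete intermediate value theorem for upward-1-Lipschitz sequences. -/
lemma ivt (f : ℕ → ℕ) (t : ℕ) : ∀ n, (∀ i < n, f (i+1) ≤ f i + 1) → f 0 ≤ t → t ≤ f n →
    ∃ m ≤ n, f m = t := by
  intro n
  induction n with
  | zero => intro _ h1 h2; exact ⟨0, le_refl _, le_antisymm h1 h2⟩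
  | succ n ih =>
    intro hlip h1 h2
    by_cases h : t ≤ f n
    · obtain ⟨m, hm, hfm⟩ := ih (fun i hi => hlip i (by omega)) h1 h
      exact ⟨m, by omega, hfm⟩
    · have := hlip n (by omega)
      exact ⟨n+1, le_refl _, by omega⟩

/-- Rounding an integer towards zero to a multiple of `L₀`. -/
lemma round_coord (L₀ : ℕ) (m : ℤ) :
    ∃ r : ℤ, (L₀:ℤ) ∣ r ∧ r.natAbs = m.natAbs / L₀ * L₀ ∧ (m - r).natAbs = m.natAbs % L₀ := by
  set a := m.natAbs with ha
  set c := a / L₀ * L₀ with hc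
  have hsum : c + a % L₀ = a := by
    have := Nat.mod_add_div' a L₀
    omega
  refine ⟨if 0 ≤ m then (c:ℤ) else -(c:ℤ), ?_, ?_, ?_⟩
  · split
    · exact ⟨(a / L₀ : ℕ), by push_cast [hc]; ring⟩
    · exact ⟨-(a / L₀ : ℕ), by push_cast [hc]; ring⟩
  · split <;> simp
  · have ham : m.natAbs = a := rfl
    split <;> omega

/-- Rounding a point of `ℤ^d` to a point of the renormalized lattice `L₀·ℤ^d` on the
`ℓ^∞`-sphere of the corresponding radius. -/
lemma round_exists (d L₀ k : ℕ) (hd : 1 ≤ d) (hL₀ : 1 ≤ L₀) (y : Fin d → ℤ)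
    (hy : normInf y = k * L₀) :
    ∃ x : Fin d → ℤ, (∀ i, (L₀:ℤ) ∣ x i) ∧ normInf x = k * L₀ ∧ normInf (y - x) ≤ L₀ := by
  choose x hdvd habs hdiff using fun i => round_coord L₀ (y i)
  refine ⟨x, hdvd, ?_, ?_⟩
  · have : Nonempty (Fin d) := ⟨⟨0, hd⟩⟩
    obtain ⟨i₀, -, hi₀⟩ := Finset.exists_mem_eq_sup Finset.univ Finset.univ_nonempty
      (fun i => (y i).natAbs)
    refine le_antisymm (Finset.sup_le fun i _ => ?_) ?_
    · rw [habs i]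
      calc (y i).natAbs / L₀ * L₀ ≤ (y i).natAbs := Nat.div_mul_le_self _ _
        _ ≤ k * L₀ := hy ▸ le_normInf y i
    · have h0 : (y i₀).natAbs = k * L₀ := by rw [← hi₀]; exact hy
      have hx0 : (x i₀).natAbs = k * L₀ := by
        rw [habs i₀, h0, Nat.mul_div_cancel k (by omega)]
      exact hx0 ▸ le_normInf x i₀
  · refine Finset.sup_le fun i _ => ?_
    have : ((y - x) i).natAbs = (y i).natAbs % L₀ := by simpa using hdiff i
    rw [this]
    exact le_of_lt (Nat.mod_lt _ (by omega))

/-- If a path in `E` visits the `ℓ^∞`-sphere of radius `k·L₀` at time `m` and ends far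
enough away, then it produces a crossing from `B_∞(x, L₀)` to `S_∞(x, 3L₀)` for some point
`x` of the lattice `L₀·ℤ^d` with `|x|_∞ = k·L₀`. -/
lemma crossing (d L₀ k : ℕ) (hd : 1 ≤ d) (hL₀ : 1 ≤ L₀)
    (E : Set (Fin d → ℤ)) (p : ℕ → Fin d → ℤ) (n m : ℕ)
    (hp : IsNNPathIn E p n) (hm : m ≤ n)
    (hval : normInf (p m) = k * L₀)
    (hend : k * L₀ + 3 * L₀ ≤ normInf (p n)) :
    ∃ x : Fin d → ℤ, (∀ i, (L₀:ℤ) ∣ x i) ∧ normInf x = k * L₀ ∧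
      ∃ (q : ℕ → Fin d → ℤ) (n' : ℕ), IsNNPathIn E q n' ∧
        normInf (q 0 - x) ≤ L₀ ∧ normInf (q n' - x) = 3 * L₀ := by
  obtain ⟨x, hdvd, hxn, hclose⟩ := round_exists d L₀ k hd hL₀ (p m) hval
  set g : ℕ → ℕ := fun i => normInf (p (m + i) - x) with hg
  have hlip : ∀ i < n - m, g (i+1) ≤ g i + 1 := by
    intro i hi
    have hstep := hp.1 (m + i) (by omega)
    have heq : p (m + (i+1)) - x = (p (m + i) - x) + (p (m + i + 1) - p (m + i)) := by
      rw [show m + (i+1) = m + i + 1 from rfl]; ring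
    calc g (i+1) = normInf ((p (m + i) - x) + (p (m + i + 1) - p (m + i))) := by
          rw [hg]; simp only; rw [heq]
      _ ≤ g i + normInf (p (m + i + 1) - p (m + i)) := normInf_add_le _ _
      _ ≤ g i + norm1 (p (m + i + 1) - p (m + i)) := Nat.add_le_add_left (normInf_le_norm1 _) _
      _ = g i + 1 := by rw [hstep]
  have hg0 : g 0 ≤ L₀ := by simpa [hg] using hclose
  have hgn : 3 * L₀ ≤ g (n - m) := by
    have h1 : normInf (p n) ≤ normInf (p n - x) + normInf x := by
      calc normInf (p n) = normInf ((p n - x) + x) := by rw [sub_add_cancel]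
        _ ≤ _ := normInf_add_le _ _
    have h2 : g (n - m) = normInf (p n - x) := by
      rw [hg]; simp only [show m + (n - m) = n by omega]
    omega
  obtain ⟨m', hm', hgm'⟩ := ivt g (3 * L₀) (n - m) hlip (by omega) hgn
  exact ⟨x, hdvd, hxn, fun i => p (m + i), m',
    ⟨fun i hi => hp.1 (m + i) (by omega), fun i hi => hp.2 (m + i) (by omega)⟩,
    by simpa [hg] using hg0, hgm'⟩

/-- One-step crossing decomposition (3.6)-(3.7): a crossing of `E` from `B_∞(0,L)` to
`S_∞(0,3L)`, with `L = l·L₀`, forces crossings from `B_∞(x_i, L₀)` to `S_∞(x_i, 3L₀)` for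
points `x₁, x₂` of the renormalized lattice `L₀·ℤ^d` with `|x₁|_∞ = L` and `|x₂|_∞ = 2L`. -/
theorem stmt7 (d L₀ l : ℕ) (hd : 1 ≤ d) (hL₀ : 1 ≤ L₀) (hl : 4 ≤ l)
    (E : Set (Fin d → ℤ))
    (hpath : ∃ (p : ℕ → (Fin d → ℤ)) (n : ℕ), IsNNPathIn E p n ∧
      normInf (p 0) ≤ l * L₀ ∧ normInf (p n) = 3 * (l * L₀)) :
    ∃ x₁ x₂ : Fin d → ℤ,
      (∀ i, (L₀ : ℤ) ∣ x₁ i) ∧ normInf x₁ = l * L₀ ∧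
      (∀ i, (L₀ : ℤ) ∣ x₂ i) ∧ normInf x₂ = 2 * (l * L₀) ∧
      (∃ (p : ℕ → (Fin d → ℤ)) (n : ℕ), IsNNPathIn E p n ∧
        normInf (p 0 - x₁) ≤ L₀ ∧ normInf (p n - x₁) = 3 * L₀) ∧
      (∃ (p : ℕ → (Fin d → ℤ)) (n : ℕ), IsNNPathIn E p n ∧
        normInf (p 0 - x₂) ≤ L₀ ∧ normInf (p n - x₂) = 3 * L₀) := by
  obtain ⟨p, n, hp, h0, hn⟩ := hpath
  have hlip : ∀ i < n, normInf (p (i+1)) ≤ normInf (p i) + 1 := by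
    intro i hi
    calc normInf (p (i+1)) = normInf (p i + (p (i+1) - p i)) := by rw [add_sub_cancel]
      _ ≤ normInf (p i) + normInf (p (i+1) - p i) := normInf_add_le _ _
      _ ≤ normInf (p i) + norm1 (p (i+1) - p i) := Nat.add_le_add_left (normInf_le_norm1 _) _
      _ = normInf (p i) + 1 := by rw [hp.1 i hi]
  obtain ⟨m₁, hm₁, hv₁⟩ := ivt (fun i => normInf (p i)) (l * L₀) n hlip h0
    (show l * L₀ ≤ normInf (p n) by omega)
  obtain ⟨m₂, hm₂, hv₂⟩ := ivt (fun i => normInf (p i)) (2 * (l * L₀)) n hlip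
    (show normInf (p 0) ≤ 2 * (l * L₀) by omega)
    (show 2 * (l * L₀) ≤ normInf (p n) by omega)
  have hv₁' : normInf (p m₁) = l * L₀ := hv₁
  have hv₂' : normInf (p m₂) = 2 * l * L₀ := by rw [show normInf (p m₂) = 2 * (l * L₀) from hv₂]; ring
  obtain ⟨x₁, hd₁, hn₁, hc₁⟩ := crossing d L₀ l hd hL₀ E p n m₁ hp hm₁ hv₁'
    (by nlinarith)
  obtain ⟨x₂, hd₂, hn₂, hc₂⟩ := crossing d L₀ (2*l) hd hL₀ E p n m₂ hp hm₂ hv₂'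
    (by nlinarith)
  exact ⟨x₁, x₂, hd₁, hn₁, hd₂, by rw [hn₂]; ring, hc₁, hc₂⟩
end

section
/- There exists a universal constant c ≥ 1 with the following property. Let d ≥ 3, L₀ ≥ 1, l₀ ≥ 1 and n ≥ 0 be integers, set L_k = l₀^k·L₀ for 0 ≤ k ≤ n, and let x ∈ L_n·ℤ^d. Then the number of proper embeddings of T_n in ℤ^d with root at x is at most (c·l₀)^{2(d-1)·2^n}. -/
/-- `T` is a proper embedding of the dyadic tree `T_n` (finite sequences in `{1,2}` of
length at most `n`) in `ℤ^d` with root at `x ∈ L_n·ℤ^d`, for the scales `L_k = l₀^k L₀`: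
the root is mapped to `x`, and the two descendants of a vertex `m` of generation `k < n`
are mapped into `L_{n-k-1}·ℤ^d ∩ S_∞(T(m), L_{n-k})` and
`L_{n-k-1}·ℤ^d ∩ S_∞(T(m), 2 L_{n-k})`, respectively. -/
def IsProperEmbedding (d L₀ l₀ n : ℕ) (x : Fin d → ℤ)
    (T : {m : List (Fin 2) // m.length ≤ n} → (Fin d → ℤ)) : Prop :=
  T ⟨[], Nat.zero_le n⟩ = x ∧
  ∀ (m : List (Fin 2)) (hm : m.length < n),
    ((∀ i, ((l₀ ^ (n - m.length - 1) * L₀ : ℕ) : ℤ) ∣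
        T ⟨m ++ [0], by simpa using hm⟩ i) ∧
      normInf (T ⟨m ++ [0], by simpa using hm⟩ - T ⟨m, hm.le⟩) =
        l₀ ^ (n - m.length) * L₀) ∧
    ((∀ i, ((l₀ ^ (n - m.length - 1) * L₀ : ℕ) : ℤ) ∣
        T ⟨m ++ [1], by simpa using hm⟩ i) ∧
      normInf (T ⟨m ++ [1], by simpa using hm⟩ - T ⟨m, hm.le⟩) =
        2 * (l₀ ^ (n - m.length) * L₀))


set_option maxHeartbeats 1000000
set_option synthInstance.maxHeartbeats 400000

lemma normInf_apply_le {d : ℕ} (w : Fin d → ℤ) (k : Fin d) : (w k).natAbs ≤ normInf w :=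
  Finset.le_sup (f := fun i => (w i).natAbs) (Finset.mem_univ k)

lemma normInf_smul {d s : ℕ} (w : Fin d → ℤ) :
    normInf (fun i => (s : ℤ) * w i) = s * normInf w := by
  unfold normInf
  have h : ∀ a b : ℕ, s * (a ⊔ b) = s * a ⊔ s * b := by
    intro a b; rcases le_total a b with h | h
    · rw [max_eq_right h, max_eq_right (Nat.mul_le_mul_left s h)]
    · rw [max_eq_left h, max_eq_left (Nat.mul_le_mul_left s h)]
  have key := Finset.comp_sup_eq_sup_comp (s := (Finset.univ : Finset (Fin d)))
    (f := fun i => (w i).natAbs) (fun a => s * a) (fun a b => h a b) (by simp)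
  rw [key]
  congr 1
  funext i
  simp [Int.natAbs_mul]

/-- The least index achieving the sup norm. -/
noncomputable def idx {e : ℕ} (w : Fin (e + 1) → ℤ) : Fin (e + 1) :=
  (Finset.univ.filter (fun i => (w i).natAbs = normInf w)).min' (by
    obtain ⟨i, -, hi⟩ := Finset.exists_mem_eq_sup (Finset.univ : Finset (Fin (e+1)))
      ⟨0, Finset.mem_univ 0⟩ (fun i => (w i).natAbs)
    exact ⟨i, Finset.mem_filter.mpr ⟨Finset.mem_univ i, hi.symm⟩⟩)

lemma idx_spec {e : ℕ} (w : Fin (e + 1) → ℤ) : (w (idx w)).natAbs = normInf w := by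
  have h := Finset.min'_mem (Finset.univ.filter (fun i => (w i).natAbs = normInf w))
    (by
      obtain ⟨i, -, hi⟩ := Finset.exists_mem_eq_sup (Finset.univ : Finset (Fin (e+1)))
        ⟨0, Finset.mem_univ 0⟩ (fun i => (w i).natAbs)
      exact ⟨i, Finset.mem_filter.mpr ⟨Finset.mem_univ i, hi.symm⟩⟩)
  rw [Finset.mem_filter] at h
  exact h.2

lemma sphere_card_le (e t : ℕ) :
    Nat.card {w : Fin (e + 1) → ℤ // normInf w = t} ≤ 2 * (e + 1) * (2 * t + 1) ^ e := by
  classical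
  have hbound : ∀ (w : Fin (e+1) → ℤ), normInf w = t → ∀ k, (w k) ∈ Finset.Icc (-(t:ℤ)) t := by
    intro w hw k
    have h1 := normInf_apply_le w k
    rw [hw] at h1
    simp only [Finset.mem_Icc]; omega
  set F : {w : Fin (e + 1) → ℤ // normInf w = t} →
      Fin (e + 1) × Bool × (Fin e → Finset.Icc (-(t:ℤ)) t) := fun p =>
    (idx p.1, decide (0 ≤ p.1 (idx p.1)),
      fun j => ⟨p.1 ((idx p.1).succAbove j), hbound p.1 p.2 _⟩) with hF
  have hinj : Function.Injective F := by
    rintro ⟨w, hw⟩ ⟨w', hw'⟩ h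
    simp only [hF, Prod.mk.injEq] at h
    obtain ⟨hi, hb, hf⟩ := h
    have h1 : (w (idx w)).natAbs = t := by rw [idx_spec, hw]
    have h2 : (w' (idx w)).natAbs = t := by rw [hi, idx_spec, hw']
    ext k
    show w k = w' k
    by_cases hk : k = idx w
    · rw [hk]
      by_cases h0 : 0 ≤ w (idx w)
      · have h0' : 0 ≤ w' (idx w) := by
          have hb2 := hb
          rw [decide_eq_true h0, ← hi] at hb2
          exact of_decide_eq_true hb2.symm
        omega
      · have h0' : ¬ (0 ≤ w' (idx w)) := by
          intro hc
          rw [← hi, decide_eq_true hc] at hb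
          exact h0 (of_decide_eq_true hb)
        omega
    · obtain ⟨j, hj⟩ := Fin.exists_succAbove_eq hk
      have := congrFun hf j
      rw [Subtype.mk.injEq, ← hi, hj] at this
      exact this
  calc Nat.card {w : Fin (e + 1) → ℤ // normInf w = t}
      ≤ Nat.card (Fin (e + 1) × Bool × (Fin e → Finset.Icc (-(t:ℤ)) t)) :=
        Nat.card_le_card_of_injective F hinj
    _ = 2 * (e + 1) * (2 * t + 1) ^ e := by
        rw [Nat.card_eq_fintype_card]
        simp [Fintype.card_prod, Fintype.card_fun, Fintype.card_coe, Int.card_Icc]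
        rw [show ((t:ℤ) + 1 + t).toNat = 2 * t + 1 by omega]
        ring

lemma finite_sphere (d t : ℕ) : Finite {w : Fin d → ℤ // normInf w = t} := by
  classical
  apply Finite.of_injective (f := fun (p : {w : Fin d → ℤ // normInf w = t}) =>
    (fun i => (⟨p.1 i, by
      have h1 := normInf_apply_le p.1 i
      rw [p.2] at h1
      simp only [Finset.mem_Icc]; omega⟩ : Finset.Icc (-(t:ℤ)) t) : Fin d → Finset.Icc (-(t:ℤ)) t))
  rintro ⟨w, hw⟩ ⟨w', hw'⟩ h
  ext k
  show w k = w' k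
  have := congrFun h k
  rwa [Subtype.mk.injEq] at this

lemma diff_card_le (e s t : ℕ) (hs : 1 ≤ s) :
    Nat.card {v : Fin (e + 1) → ℤ // (∀ i, (s : ℤ) ∣ v i) ∧ normInf v = s * t} ≤
      2 * (e + 1) * (2 * t + 1) ^ e := by
  classical
  haveI := finite_sphere (e + 1) t
  have key : ∀ (v : Fin (e+1) → ℤ), (∀ i, (s : ℤ) ∣ v i) → normInf v = s * t →
      normInf (fun i => v i / s) = t := by
    intro v hdvd hn
    have hv : (fun i => (s:ℤ) * (v i / s)) = v := by
      funext i; exact Int.mul_ediv_cancel' (hdvd i)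
    have := normInf_smul (s := s) (fun i => v i / s)
    rw [hv, hn] at this
    exact (Nat.eq_of_mul_eq_mul_left (by omega) this.symm)
  have hle := Nat.card_le_card_of_injective
    (f := fun (p : {v : Fin (e + 1) → ℤ // (∀ i, (s : ℤ) ∣ v i) ∧ normInf v = s * t}) =>
      (⟨fun i => p.1 i / s, key p.1 p.2.1 p.2.2⟩ : {w : Fin (e + 1) → ℤ // normInf w = t}))
    (by
      rintro ⟨v, hv⟩ ⟨v', hv'⟩ h
      rw [Subtype.mk.injEq] at h
      ext k
      show v k = v' k
      have hk := congrFun h k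
      have e1 : v k = s * (v k / s) := (Int.mul_ediv_cancel' (hv.1 k)).symm
      have e2 : v' k = s * (v' k / s) := (Int.mul_ediv_cancel' (hv'.1 k)).symm
      rw [e1, e2, hk])
  exact hle.trans (sphere_card_le e t)

instance finite_lists_lt (n : ℕ) : Finite {l : List (Fin 2) // l.length < n} :=
  (List.finite_length_lt (Fin 2) n).to_subtype

lemma card_lists_lt (n : ℕ) : Nat.card {l : List (Fin 2) // l.length < n} ≤ 2 ^ n - 1 := by
  induction n with
  | zero =>
      haveI : IsEmpty {l : List (Fin 2) // l.length < 0} := ⟨fun l => by omega⟩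
      simp [Nat.card_of_isEmpty]
  | succ n ih =>
      haveI := Fintype.ofFinite {l : List (Fin 2) // l.length < n}
      set g : Option (Fin 2 × {l : List (Fin 2) // l.length < n}) →
          {l : List (Fin 2) // l.length < n + 1} := fun o =>
        match o with
        | none => ⟨[], by simp⟩
        | some (j, ⟨l, hl⟩) => ⟨j :: l, by simpa using hl⟩ with hg
      have hsurj : Function.Surjective g := by
        rintro ⟨l, hl⟩
        match l with
        | [] => exact ⟨none, rfl⟩
        | j :: l' => exact ⟨some (j, ⟨l', by simpa using hl⟩), rfl⟩
      have := Nat.card_le_card_of_surjective g hsurj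
      rw [Finite.card_option, Nat.card_prod, Nat.card_eq_fintype_card (α := Fin 2),
        Fintype.card_fin] at this
      have h2 : 1 ≤ 2 ^ n := Nat.one_le_two_pow
      calc Nat.card {l : List (Fin 2) // l.length < n + 1} ≤ 2 * Nat.card {l : List (Fin 2) // l.length < n} + 1 := this
    _ ≤ 2 * (2 ^ n - 1) + 1 := by omega
    _ ≤ 2 ^ (n + 1) - 1 := by rw [pow_succ]; omega

lemma two_mul_succ_le_three_pow (e : ℕ) (he : 2 ≤ e) : 2 * (e + 1) ≤ 3 ^ e := by
  induction e, he using Nat.le_induction with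
  | base => norm_num
  | succ e he ih =>
      have : (3:ℕ) ^ e ≥ 1 := Nat.one_le_pow _ _ (by norm_num)
      calc 2 * (e + 1 + 1) = 2 * (e + 1) + 2 := by ring
        _ ≤ 3 ^ e + 2 := by omega
        _ ≤ 3 ^ (e + 1) := by rw [pow_succ]; omega


/-- Combinatorial complexity bound (3.5): there is a universal constant `c ≥ 1` such that
the number of proper embeddings of `T_n` in `ℤ^d` with root at `x` is at most
`(c l₀)^{2(d-1)2^n}`. -/
theorem stmt12 : ∃ c : ℝ, 1 ≤ c ∧ ∀ (d L₀ l₀ n : ℕ), 3 ≤ d → 1 ≤ L₀ → 1 ≤ l₀ →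
    ∀ x : Fin d → ℤ, (∀ i, ((l₀ ^ n * L₀ : ℕ) : ℤ) ∣ x i) →
    (Nat.card {T : {m : List (Fin 2) // m.length ≤ n} → (Fin d → ℤ) //
        IsProperEmbedding d L₀ l₀ n x T} : ℝ) ≤ (c * l₀) ^ (2 * (d - 1) * 2 ^ n) := by
  classical
  refine ⟨15, by norm_num, ?_⟩
  intro d L₀ l₀ n hd hL hl x hx
  obtain ⟨e, rfl⟩ : ∃ e, d = e + 1 := ⟨d - 1, by omega⟩
  have he : 2 ≤ e := by omega
  -- divisibility of embedding values at all vertices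
  have hTdvd : ∀ (T : {m : List (Fin 2) // m.length ≤ n} → (Fin (e+1) → ℤ)),
      IsProperEmbedding (e+1) L₀ l₀ n x T →
      ∀ (m : List (Fin 2)) (hm : m.length ≤ n) (i : Fin (e+1)),
      ((l₀ ^ (n - m.length) * L₀ : ℕ) : ℤ) ∣ T ⟨m, hm⟩ i := by
    intro T hT m
    induction m using List.reverseRecOn with
    | nil =>
        intro hm i
        have h0 : T ⟨[], hm⟩ = x := hT.1
        rw [h0]
        simpa using hx i
    | append_singleton m' j ih =>
        intro hm i
        have hm' : m'.length < n := by
          simp only [List.length_append, List.length_singleton] at hm; omega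
        have hstep := hT.2 m' hm'
        have hlen : n - (m' ++ [j]).length = n - m'.length - 1 := by
          simp only [List.length_append, List.length_singleton]; omega
        rw [hlen]
        fin_cases j
        · exact hstep.1.1 i
        · exact hstep.2.1 i
  -- property of the increments
  have hprop : ∀ (T : {m : List (Fin 2) // m.length ≤ n} → (Fin (e+1) → ℤ)),
      IsProperEmbedding (e+1) L₀ l₀ n x T →
      ∀ (m : List (Fin 2)) (hm : m.length < n) (j : Fin 2),
      (∀ i, ((l₀ ^ (n - m.length - 1) * L₀ : ℕ) : ℤ) ∣
          (T ⟨m ++ [j], by simpa using hm⟩ - T ⟨m, hm.le⟩) i) ∧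
        normInf (T ⟨m ++ [j], by simpa using hm⟩ - T ⟨m, hm.le⟩) =
          (if j = 0 then 1 else 2) * (l₀ ^ (n - m.length) * L₀) := by
    intro T hT m hm j
    have hstep := hT.2 m hm
    have hpar : ∀ i, ((l₀ ^ (n - m.length - 1) * L₀ : ℕ) : ℤ) ∣ T ⟨m, hm.le⟩ i := by
      intro i
      refine dvd_trans ?_ (hTdvd T hT m hm.le i)
      exact Int.natCast_dvd_natCast.mpr
        (Nat.mul_dvd_mul (pow_dvd_pow l₀ (by omega)) dvd_rfl)
    fin_cases j
    · refine ⟨fun i => ?_, by simpa using hstep.1.2⟩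
      simpa [Pi.sub_apply] using dvd_sub (hstep.1.1 i) (hpar i)
    · refine ⟨fun i => ?_, by simpa using hstep.2.2⟩
      simpa [Pi.sub_apply] using dvd_sub (hstep.2.1 i) (hpar i)
  -- the target family
  haveI hDfin : ∀ p : {l : List (Fin 2) // l.length < n} × Fin 2,
      Finite {v : Fin (e+1) → ℤ //
        (∀ i, ((l₀ ^ (n - p.1.1.length - 1) * L₀ : ℕ) : ℤ) ∣ v i) ∧
        normInf v = (if p.2 = 0 then 1 else 2) * (l₀ ^ (n - p.1.1.length) * L₀)} := by
    intro p
    haveI := finite_sphere (e+1)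
      ((if p.2 = 0 then 1 else 2) * (l₀ ^ (n - p.1.1.length) * L₀))
    exact Finite.of_injective
      (fun v => (⟨v.1, v.2.2⟩ : {w : Fin (e+1) → ℤ //
        normInf w = (if p.2 = 0 then 1 else 2) * (l₀ ^ (n - p.1.1.length) * L₀)}))
      (by rintro a b h; have h2 := Subtype.ext_iff.mp h; exact Subtype.ext h2)
  -- the injection
  haveI := Fintype.ofFinite ({l : List (Fin 2) // l.length < n} × Fin 2)
  -- per-factor bound
  have hfac : ∀ p : {l : List (Fin 2) // l.length < n} × Fin 2,
      Nat.card {v : Fin (e+1) → ℤ //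
        (∀ i, ((l₀ ^ (n - p.1.1.length - 1) * L₀ : ℕ) : ℤ) ∣ v i) ∧
        normInf v = (if p.2 = 0 then 1 else 2) * (l₀ ^ (n - p.1.1.length) * L₀)} ≤
        2 * (e + 1) * (2 * (2 * l₀) + 1) ^ e := by
    intro p
    set k := p.1.1.length with hk
    set c : ℕ := if p.2 = (0 : Fin 2) then 1 else 2 with hc
    have hcle : c ≤ 2 := by rw [hc]; split <;> omega
    have hr : c * (l₀ ^ (n - k) * L₀) = (l₀ ^ (n - k - 1) * L₀) * (c * l₀) := by
      have hp : l₀ ^ (n - k) = l₀ ^ (n - k - 1) * l₀ := by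
        rw [← pow_succ]; congr 1
        have := p.1.2; omega
      rw [hp]; ring
    have hcongr := Nat.card_congr (Equiv.subtypeEquivRight (fun v : Fin (e+1) → ℤ => by
      rw [hr] :
      ∀ v : Fin (e+1) → ℤ,
        ((∀ i, ((l₀ ^ (n - k - 1) * L₀ : ℕ) : ℤ) ∣ v i) ∧
          normInf v = c * (l₀ ^ (n - k) * L₀)) ↔
        ((∀ i, ((l₀ ^ (n - k - 1) * L₀ : ℕ) : ℤ) ∣ v i) ∧
          normInf v = (l₀ ^ (n - k - 1) * L₀) * (c * l₀))))
    rw [hcongr]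
    clear hcongr
    have hs : 1 ≤ l₀ ^ (n - k - 1) * L₀ :=
      Nat.one_le_iff_ne_zero.mpr (by positivity)
    refine (diff_card_le e _ (c * l₀) hs).trans ?_
    have hcl : c * l₀ ≤ 2 * l₀ := Nat.mul_le_mul_right l₀ hcle
    exact Nat.mul_le_mul_left _ (Nat.pow_le_pow_left (by omega) e)
  -- count the index set
  have hJ : Fintype.card ({l : List (Fin 2) // l.length < n} × Fin 2) ≤ 2 * 2 ^ n := by
    rw [← Nat.card_eq_fintype_card, Nat.card_prod,
      Nat.card_eq_fintype_card (α := Fin 2), Fintype.card_fin]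
    have h1 := card_lists_lt n
    have h2 : 1 ≤ 2 ^ n := Nat.one_le_two_pow
    omega
  -- put it together in ℕ
  have hM : 2 * (e + 1) * (2 * (2 * l₀) + 1) ^ e ≤ (15 * l₀) ^ e := by
    have h3 := two_mul_succ_le_three_pow e he
    have h5 : 2 * (2 * l₀) + 1 ≤ 5 * l₀ := by omega
    calc 2 * (e + 1) * (2 * (2 * l₀) + 1) ^ e ≤ 3 ^ e * (5 * l₀) ^ e :=
          Nat.mul_le_mul h3 (Nat.pow_le_pow_left h5 e)
      _ = (15 * l₀) ^ e := by rw [← Nat.mul_pow]; ring_nf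
  have hbase : 1 ≤ 15 * l₀ := by omega
  have hnat : Nat.card {T : {m : List (Fin 2) // m.length ≤ n} → (Fin (e+1) → ℤ) //
      IsProperEmbedding (e+1) L₀ l₀ n x T} ≤ (15 * l₀) ^ (2 * e * 2 ^ n) := by
    calc Nat.card {T : {m : List (Fin 2) // m.length ≤ n} → (Fin (e+1) → ℤ) //
        IsProperEmbedding (e+1) L₀ l₀ n x T}
        ≤ ∏ p : {l : List (Fin 2) // l.length < n} × Fin 2,
            Nat.card {v : Fin (e+1) → ℤ //
              (∀ i, ((l₀ ^ (n - p.1.1.length - 1) * L₀ : ℕ) : ℤ) ∣ v i) ∧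
              normInf v = (if p.2 = 0 then 1 else 2) * (l₀ ^ (n - p.1.1.length) * L₀)} :=
          le_trans (α := ℕ) (
    Nat.card_le_card_of_injective
    (f := fun (T : {T : {m : List (Fin 2) // m.length ≤ n} → (Fin (e+1) → ℤ) //
        IsProperEmbedding (e+1) L₀ l₀ n x T})
      (p : {l : List (Fin 2) // l.length < n} × Fin 2) =>
      (⟨T.1 ⟨p.1.1 ++ [p.2], by simpa using p.1.2⟩ - T.1 ⟨p.1.1, p.1.2.le⟩,
        hprop T.1 T.2 p.1.1 p.1.2 p.2⟩ :
        {v : Fin (e+1) → ℤ //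
          (∀ i, ((l₀ ^ (n - p.1.1.length - 1) * L₀ : ℕ) : ℤ) ∣ v i) ∧
          normInf v = (if p.2 = 0 then 1 else 2) * (l₀ ^ (n - p.1.1.length) * L₀)}))
    (by
      rintro ⟨T, hT⟩ ⟨T', hT'⟩ h
      have key : ∀ (m : List (Fin 2)) (hm : m.length ≤ n), T ⟨m, hm⟩ = T' ⟨m, hm⟩ := by
        intro m
        induction m using List.reverseRecOn with
        | nil => intro hm; rw [(show T ⟨[], hm⟩ = x from hT.1), (show T' ⟨[], hm⟩ = x from hT'.1)]
        | append_singleton l a ih =>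
            intro hm
            have hl : l.length < n := by
              simp only [List.length_append, List.length_singleton] at hm; omega
            have hd := congrArg Subtype.val (congrFun h (⟨⟨l, hl⟩, a⟩ :
              {l : List (Fin 2) // l.length < n} × Fin 2))
            simp only at hd
            rw [ih hl.le] at hd
            exact sub_left_inj.mp hd
      apply Subtype.ext
      funext q
      exact key q.1 q.2)) (le_of_eq Nat.card_pi)
      _ ≤ ∏ _p : {l : List (Fin 2) // l.length < n} × Fin 2,
            (2 * (e + 1) * (2 * (2 * l₀) + 1) ^ e) :=
          Finset.prod_le_prod' (fun p _ => hfac p)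
      _ = (2 * (e + 1) * (2 * (2 * l₀) + 1) ^ e) ^
            Fintype.card ({l : List (Fin 2) // l.length < n} × Fin 2) := by
          rw [Finset.prod_const, Finset.card_univ]
      _ ≤ ((15 * l₀) ^ e) ^
            Fintype.card ({l : List (Fin 2) // l.length < n} × Fin 2) :=
          Nat.pow_le_pow_left hM _
      _ = (15 * l₀) ^ (e * Fintype.card ({l : List (Fin 2) // l.length < n} × Fin 2)) := by
          rw [← pow_mul]
      _ ≤ (15 * l₀) ^ (2 * e * 2 ^ n) := by
          apply Nat.pow_le_pow_right (by omega)
          calc e * Fintype.card ({l : List (Fin 2) // l.length < n} × Fin 2)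
              ≤ e * (2 * 2 ^ n) := Nat.mul_le_mul_left e hJ
            _ = 2 * e * 2 ^ n := by ring
  have hee : e + 1 - 1 = e := by omega
  rw [hee]
  calc (Nat.card {T : {m : List (Fin 2) // m.length ≤ n} → (Fin (e+1) → ℤ) //
      IsProperEmbedding (e+1) L₀ l₀ n x T} : ℝ)
      ≤ (((15 * l₀) ^ (2 * e * 2 ^ n) : ℕ) : ℝ) := Nat.cast_le.mpr hnat
    _ = (15 * (l₀ : ℝ)) ^ (2 * e * 2 ^ n) := by push_cast; ring
end

section
/- Let d ≥ 3 and 1 ≤ b ≤ d be integers, and for 1 ≤ k ≤ b set I_k = {(k-1)·⌊d/b⌋ + 1, …, k·⌊d/b⌋} ⊆ {1, …, d}. Let 𝕋 = { e_{i₁} + ⋯ + e_{i_j} : 1 ≤ j ≤ b and i_k ∈ I_k for all 1 ≤ k ≤ j } ⊆ {0,1}^d ⊆ ℤ^d, where e_i is the i-th standard unit vector, and 𝕋₀ = 𝕋 ∪ {0}. Let m ≥ 1 be an integer and let ω ⊆ 𝕋 be such that for every x = e_{i₁} + ⋯ + e_{i_j} ∈ 𝕋₀ with 0 ≤ j ≤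 b - 1, at least m of the points x + e_i with i ∈ I_{j+1} belong to ω. Then there exists i ∈ I₁ with e_i ∈ ω such that the connected component of e_i in the subgraph of ℤ^d (with nearest-neighbor adjacency) induced on ω contains at least m^{b-1} vertices. -/
/-- The nearest-neighbor lattice graph on `ℤ^d`. -/
def latticeGraph (d : ℕ) : SimpleGraph (Fin d → ℤ) where
  Adj x y := norm1 (x - y) = 1
  symm := by
    constructor
    intro x y hxy
    beta_reduce at hxy ⊢
    unfold norm1 at hxy ⊢
    calc ∑ i, ((y - x) i).natAbs
        = ∑ i, ((x - y) i).natAbs := by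
          refine Finset.sum_congr rfl fun i _ => ?_
          rw [Pi.sub_apply, Pi.sub_apply, ← Int.natAbs_neg, neg_sub]
      _ = 1 := hxy
  loopless := by
    constructor
    intro x hx
    simp [norm1] at hx

/-- The `i`-th standard unit vector of `ℤ^d`, `1 ≤ i ≤ d` (1-based indexing). -/
def unitVec (d : ℕ) (i : ℕ) : Fin d → ℤ := fun t => if (t : ℕ) + 1 = i then 1 else 0

/-- the intervals `I_k` are pairwise disjoint -/
lemma aux_disj {q k k' a : ℕ}
    (h : a ∈ Finset.Icc ((k-1)*q+1) (k*q)) (h' : a ∈ Finset.Icc ((k'-1)*q+1) (k'*q))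
    (hk : 1 ≤ k) (hk' : 1 ≤ k') : k = k' := by
  simp only [Finset.mem_Icc] at h h'
  by_contra hne
  rcases Nat.lt_or_ge k k' with hlt | hge
  · have : k * q ≤ (k'-1)*q := Nat.mul_le_mul_right _ (by omega)
    omega
  · have hlt : k' < k := lt_of_le_of_ne hge (Ne.symm hne)
    have : k' * q ≤ (k-1)*q := Nat.mul_le_mul_right _ (by omega)
    omega

lemma norm1_unitVec {d a : ℕ} (h1 : 1 ≤ a) (h2 : a ≤ d) : norm1 (unitVec d a) = 1 := by
  unfold norm1 unitVec
  have : ∀ t : Fin d, ((if (t:ℕ)+1 = a then (1:ℤ) else 0)).natAbs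
      = if (t:ℕ)+1 = a then 1 else 0 := by
    intro t; split <;> simp
  simp only [this]
  have h3 : a - 1 < d := by omega
  have h4 : ∀ t : Fin d, ((t:ℕ)+1 = a) = (t = ⟨a-1, h3⟩) := by
    intro t
    simp only [eq_iff_iff]
    constructor
    · intro h; exact Fin.ext (show (t:ℕ) = a - 1 by omega)
    · intro h; subst h; show a - 1 + 1 = a; omega
  simp only [h4]
  simp

/-- coordinate of a partial sum, as a filter cardinality -/
lemma coord_eq {d j : ℕ} (i' : ℕ → ℕ) (t : Fin d) :
    (∑ k ∈ Finset.Icc 1 j, unitVec d (i' k)) t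
      = ((Finset.Icc 1 j).filter (fun k => (t:ℕ)+1 = i' k)).card := by
  rw [Finset.sum_apply]
  unfold unitVec
  rw [Finset.sum_boole]

lemma valid_inj {q j : ℕ} {i' : ℕ → ℕ}
    (hval : ∀ k ∈ Finset.Icc 1 j, i' k ∈ Finset.Icc ((k-1)*q+1) (k*q)) :
    ∀ k ∈ Finset.Icc 1 j, ∀ k' ∈ Finset.Icc 1 j, i' k = i' k' → k = k' := by
  intro k hk k' hk' h
  have h1 := hval k hk
  have h2 := hval k' hk'
  rw [h] at h1
  exact aux_disj h1 h2 (Finset.mem_Icc.mp hk).1 (Finset.mem_Icc.mp hk').1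

lemma coord_le_one {d q j : ℕ} {i' : ℕ → ℕ}
    (hval : ∀ k ∈ Finset.Icc 1 j, i' k ∈ Finset.Icc ((k-1)*q+1) (k*q)) (t : Fin d) :
    (∑ k ∈ Finset.Icc 1 j, unitVec d (i' k)) t ≤ 1 := by
  rw [coord_eq]
  have h : ((Finset.Icc 1 j).filter (fun k => (t:ℕ)+1 = i' k)).card ≤ 1 := by
    refine Finset.card_le_one.mpr fun a ha b hb => ?_
    rw [Finset.mem_filter] at ha hb
    exact valid_inj hval a ha.1 b hb.1 (ha.2 ▸ hb.2 ▸ rfl)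
  exact_mod_cast h

lemma coord_nonneg {d j : ℕ} (i' : ℕ → ℕ) (t : Fin d) :
    0 ≤ (∑ k ∈ Finset.Icc 1 j, unitVec d (i' k)) t := by
  rw [coord_eq]; positivity

lemma sum_mem_Icc01 {d q j : ℕ} {i' : ℕ → ℕ}
    (hval : ∀ k ∈ Finset.Icc 1 j, i' k ∈ Finset.Icc ((k-1)*q+1) (k*q)) :
    (∑ k ∈ Finset.Icc 1 j, unitVec d (i' k)) ∈ Finset.Icc (0 : Fin d → ℤ) 1 := by
  rw [Finset.mem_Icc]
  exact ⟨fun t => coord_nonneg i' t, fun t => coord_le_one hval t⟩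

lemma coord_pos {d j : ℕ} {i' : ℕ → ℕ} {k₀ : ℕ} (hk₀ : k₀ ∈ Finset.Icc 1 j)
    (t : Fin d) (ht : (t:ℕ)+1 = i' k₀) :
    (1:ℤ) ≤ (∑ k ∈ Finset.Icc 1 j, unitVec d (i' k)) t := by
  rw [coord_eq]
  have h : 0 < ((Finset.Icc 1 j).filter (fun k => (t:ℕ)+1 = i' k)).card :=
    Finset.card_pos.mpr ⟨k₀, Finset.mem_filter.mpr ⟨hk₀, ht⟩⟩
  exact_mod_cast h

lemma coord_exists {d j : ℕ} {i' : ℕ → ℕ} {t : Fin d}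
    (h : (∑ k ∈ Finset.Icc 1 j, unitVec d (i' k)) t ≠ 0) :
    ∃ k ∈ Finset.Icc 1 j, (t:ℕ)+1 = i' k := by
  rw [coord_eq] at h
  have : ((Finset.Icc 1 j).filter (fun k => (t:ℕ)+1 = i' k)).Nonempty := by
    rw [Finset.nonempty_iff_ne_empty]
    intro hc
    rw [hc] at h
    simp at h
  obtain ⟨k, hk⟩ := this
  rw [Finset.mem_filter] at hk
  exact ⟨k, hk.1, hk.2⟩

lemma recover {d q b : ℕ} {i' i'' : ℕ → ℕ}
    (h1 : ∀ k ∈ Finset.Icc 1 b, i' k ∈ Finset.Icc ((k-1)*q+1) (k*q))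
    (h2 : ∀ k ∈ Finset.Icc 1 b, i'' k ∈ Finset.Icc ((k-1)*q+1) (k*q))
    (hbd : b * q ≤ d)
    (heq : (∑ k ∈ Finset.Icc 1 b, unitVec d (i' k)) = ∑ k ∈ Finset.Icc 1 b, unitVec d (i'' k))
    {k₀ : ℕ} (hk₀ : k₀ ∈ Finset.Icc 1 b) : i' k₀ = i'' k₀ := by
  obtain ⟨hk1, hk2⟩ := Finset.mem_Icc.mp hk₀
  obtain ⟨ha1, ha2⟩ := Finset.mem_Icc.mp (h1 k₀ hk₀)
  have had : i' k₀ ≤ d := le_trans ha2 (le_trans (Nat.mul_le_mul_right q hk2) hbd)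
  have h3 : i' k₀ - 1 < d := by omega
  set t : Fin d := ⟨i' k₀ - 1, h3⟩ with htdef
  have ht : (t:ℕ)+1 = i' k₀ := by show i' k₀ - 1 + 1 = i' k₀; omega
  have hpos : (1:ℤ) ≤ (∑ k ∈ Finset.Icc 1 b, unitVec d (i'' k)) t := by
    rw [← heq]; exact coord_pos hk₀ t ht
  obtain ⟨k, hk, htk⟩ := coord_exists (by omega : (∑ k ∈ Finset.Icc 1 b, unitVec d (i'' k)) t ≠ 0)
  have heqa : i'' k = i' k₀ := by omega
  have hkk : k = k₀ := aux_disj (heqa ▸ h2 k hk) (h1 k₀ hk₀)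
    (Finset.mem_Icc.mp hk).1 hk1
  rw [← hkk, heqa, hkk]

lemma adj_step {d : ℕ} (x : Fin d → ℤ) {a : ℕ} (h1 : 1 ≤ a) (h2 : a ≤ d) :
    (latticeGraph d).Adj (x + unitVec d a) x := by
  show norm1 ((x + unitVec d a) - x) = 1
  have h : (x + unitVec d a) - x = unitVec d a := by
    funext t; simp
  rw [h]
  exact norm1_unitVec h1 h2

lemma sum_succ_top {d : ℕ} (i' : ℕ → ℕ) (l : ℕ) :
    ∑ k ∈ Finset.Icc 1 (l+1), unitVec d (i' k)
      = (∑ k ∈ Finset.Icc 1 l, unitVec d (i' k)) + unitVec d (i' (l+1)) := by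
  rw [Finset.sum_Icc_succ_top (by omega : 1 ≤ l + 1)]

/-- reachability along the partial sums -/
lemma reach {d b q : ℕ} (ω : Set (Fin d → ℤ)) {i' : ℕ → ℕ}
    (hval : ∀ k ∈ Finset.Icc 1 b, i' k ∈ Finset.Icc ((k-1)*q+1) (k*q))
    (hbd : b * q ≤ d)
    (hsums : ∀ l ∈ Finset.Icc 1 b, (∑ k ∈ Finset.Icc 1 l, unitVec d (i' k)) ∈ ω) :
    ∀ l, 1 ≤ l → l ≤ b → ∀ (hx : (∑ k ∈ Finset.Icc 1 1, unitVec d (i' k)) ∈ ω)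
      (hy : (∑ k ∈ Finset.Icc 1 l, unitVec d (i' k)) ∈ ω),
      (SimpleGraph.induce ω (latticeGraph d)).Reachable ⟨_, hx⟩ ⟨_, hy⟩ := by
  intro l hl1
  induction l, hl1 using Nat.le_induction with
  | base => intro _ hx hy; rfl
  | succ l hl ih =>
    intro hlb hx hy
    have hprev : (∑ k ∈ Finset.Icc 1 l, unitVec d (i' k)) ∈ ω :=
      hsums l (Finset.mem_Icc.mpr ⟨hl, by omega⟩)
    refine (ih (by omega) hx hprev).trans ?_
    have hmem := Finset.mem_Icc.mp (hval (l+1) (Finset.mem_Icc.mpr ⟨by omega, hlb⟩))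
    have h1 : 1 ≤ i' (l+1) := by omega
    have h2 : i' (l+1) ≤ d := by
      have : (l+1) * q ≤ b * q := Nat.mul_le_mul_right q hlb
      omega
    have hadj : (latticeGraph d).Adj (∑ k ∈ Finset.Icc 1 (l+1), unitVec d (i' k))
        (∑ k ∈ Finset.Icc 1 l, unitVec d (i' k)) := by
      rw [sum_succ_top]
      exact adj_step _ h1 h2
    exact SimpleGraph.Adj.reachable (by exact hadj.symm :
      (SimpleGraph.induce ω (latticeGraph d)).Adj ⟨_, hprev⟩ ⟨_, hy⟩)

/-- the endpoint set of descendants of the generation-`j` vertex given by `i` -/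
noncomputable def Eset (d b q : ℕ) (ω : Set (Fin d → ℤ)) (j : ℕ) (i : ℕ → ℕ) :
    Finset (Fin d → ℤ) :=
  @Finset.filter _ (fun y => ∃ i' : ℕ → ℕ,
    (∀ k ∈ Finset.Icc 1 j, i' k = i k) ∧
    (∀ k ∈ Finset.Icc 1 b, i' k ∈ Finset.Icc ((k-1)*q+1) (k*q)) ∧
    (∀ l ∈ Finset.Icc j b, (∑ k ∈ Finset.Icc 1 l, unitVec d (i' k)) ∈ ω) ∧
    y = ∑ k ∈ Finset.Icc 1 b, unitVec d (i' k)) (Classical.decPred _)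
    (Finset.Icc (0 : Fin d → ℤ) 1)

lemma mem_Eset {d b q : ℕ} {ω : Set (Fin d → ℤ)} {j : ℕ} {i : ℕ → ℕ} {y : Fin d → ℤ} :
    y ∈ Eset d b q ω j i ↔ ∃ i' : ℕ → ℕ,
    (∀ k ∈ Finset.Icc 1 j, i' k = i k) ∧
    (∀ k ∈ Finset.Icc 1 b, i' k ∈ Finset.Icc ((k-1)*q+1) (k*q)) ∧
    (∀ l ∈ Finset.Icc j b, (∑ k ∈ Finset.Icc 1 l, unitVec d (i' k)) ∈ ω) ∧
    y = ∑ k ∈ Finset.Icc 1 b, unitVec d (i' k) := by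
  classical
  unfold Eset
  rw [Finset.mem_filter]
  constructor
  · exact fun h => h.2
  · intro h
    refine ⟨?_, h⟩
    obtain ⟨i', _, hval, _, hy⟩ := h
    rw [hy]
    exact sum_mem_Icc01 hval

lemma key (d b m q : ℕ) (ω : Set (Fin d → ℤ)) (hb1 : 1 ≤ b) (hbd : b * q ≤ d)
    (hchild : ∀ j : ℕ, j ≤ b - 1 → ∀ i : ℕ → ℕ,
      (∀ k ∈ Finset.Icc 1 j, i k ∈ Finset.Icc ((k - 1) * q + 1) (k * q)) →
      m ≤ (@Finset.filter _
        (fun t => (∑ k ∈ Finset.Icc 1 j, unitVec d (i k)) + unitVec d t ∈ ω)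
        (Classical.decPred _)
        (Finset.Icc (j * q + 1) ((j + 1) * q))).card) :
    ∀ r j, b - j = r → ∀ i : ℕ → ℕ, 1 ≤ j → j ≤ b →
      (∀ k ∈ Finset.Icc 1 j, i k ∈ Finset.Icc ((k-1)*q+1) (k*q)) →
      (∑ k ∈ Finset.Icc 1 j, unitVec d (i k)) ∈ ω →
      m ^ (b - j) ≤ (Eset d b q ω j i).card := by
  classical
  intro r
  induction r with
  | zero =>
    intro j hr i hj1 hjb hval hmem
    have hjb' : j = b := by omega
    subst hjb'
    rw [Nat.sub_self, pow_zero]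
    refine Finset.card_pos.mpr ⟨∑ k ∈ Finset.Icc 1 j, unitVec d (i k), ?_⟩
    rw [mem_Eset]
    refine ⟨i, fun _ _ => rfl, hval, ?_, rfl⟩
    intro l hl
    have : l = j := by
      have := Finset.mem_Icc.mp hl; omega
    rw [this]
    exact hmem
  | succ r ih =>
    intro j hr i hj1 hjb hval hmem
    have hjlt : j < b := by omega
    set T := @Finset.filter _
        (fun t => (∑ k ∈ Finset.Icc 1 j, unitVec d (i k)) + unitVec d t ∈ ω)
        (Classical.decPred _)
        (Finset.Icc (j * q + 1) ((j + 1) * q)) with hT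
    have hTcard : m ≤ T.card := hchild j (by omega) i hval
    -- validity of the updated index function
    have hvalup : ∀ t ∈ T, ∀ k ∈ Finset.Icc 1 (j+1),
        Function.update i (j+1) t k ∈ Finset.Icc ((k-1)*q+1) (k*q) := by
      intro t ht k hk
      rcases eq_or_ne k (j+1) with hk' | hk'
      · subst hk'
        rw [Function.update_self]
        have := (Finset.mem_filter.mp ht).1
        simpa [Nat.succ_sub_one] using this
      · rw [Function.update_of_ne hk']
        exact hval k (Finset.mem_Icc.mpr ⟨(Finset.mem_Icc.mp hk).1,
          by have := (Finset.mem_Icc.mp hk).2; omega⟩)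
    -- the updated sum is in ω
    have hsumup : ∀ t ∈ T,
        (∑ k ∈ Finset.Icc 1 (j+1), unitVec d (Function.update i (j+1) t k)) ∈ ω := by
      intro t ht
      rw [sum_succ_top, Function.update_self]
      have hcong : (∑ k ∈ Finset.Icc 1 j, unitVec d (Function.update i (j+1) t k))
          = ∑ k ∈ Finset.Icc 1 j, unitVec d (i k) := by
        refine Finset.sum_congr rfl fun k hk => ?_
        rw [Function.update_of_ne (by have := (Finset.mem_Icc.mp hk).2; omega)]
      rw [hcong]
      exact (Finset.mem_filter.mp ht).2
    -- the union of the children's endpoint sets is inside `Eset j i`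
    have hsub : T.biUnion (fun t => Eset d b q ω (j+1) (Function.update i (j+1) t))
        ⊆ Eset d b q ω j i := by
      intro y hy
      rw [Finset.mem_biUnion] at hy
      obtain ⟨t, ht, hy⟩ := hy
      rw [mem_Eset] at hy ⊢
      obtain ⟨i', hag, hval', hsums, hyeq⟩ := hy
      refine ⟨i', ?_, hval', ?_, hyeq⟩
      · intro k hk
        rw [hag k (Finset.mem_Icc.mpr ⟨(Finset.mem_Icc.mp hk).1,
            by have := (Finset.mem_Icc.mp hk).2; omega⟩),
          Function.update_of_ne (by have := (Finset.mem_Icc.mp hk).2; omega)]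
      · intro l hl
        rcases eq_or_ne l j with hl' | hl'
        · subst hl'
          have hcong : (∑ k ∈ Finset.Icc 1 l, unitVec d (i' k))
              = ∑ k ∈ Finset.Icc 1 l, unitVec d (i k) := by
            refine Finset.sum_congr rfl fun k hk => ?_
            rw [hag k (Finset.mem_Icc.mpr ⟨(Finset.mem_Icc.mp hk).1,
                by have := (Finset.mem_Icc.mp hk).2; omega⟩),
              Function.update_of_ne (by have := (Finset.mem_Icc.mp hk).2; omega)]
          rw [hcong]
          exact hmem
        · exact hsums l (Finset.mem_Icc.mpr ⟨by have := (Finset.mem_Icc.mp hl).1; omega,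
            (Finset.mem_Icc.mp hl).2⟩)
    -- pairwise disjointness
    have hdisj : ∀ t ∈ T, ∀ t' ∈ T, t ≠ t' →
        Disjoint (Eset d b q ω (j+1) (Function.update i (j+1) t))
          (Eset d b q ω (j+1) (Function.update i (j+1) t')) := by
      intro t ht t' ht' hne
      rw [Finset.disjoint_left]
      intro y hy hy'
      rw [mem_Eset] at hy hy'
      obtain ⟨i', hag, hval', _, hyeq⟩ := hy
      obtain ⟨i'', hag', hval'', _, hyeq'⟩ := hy'
      have hj1b : j + 1 ∈ Finset.Icc 1 b := Finset.mem_Icc.mpr ⟨by omega, by omega⟩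
      have hrec : i' (j+1) = i'' (j+1) :=
        recover hval' hval'' hbd (hyeq ▸ hyeq') hj1b
      have h1 : i' (j+1) = t := by
        rw [hag (j+1) (Finset.mem_Icc.mpr ⟨by omega, le_refl _⟩), Function.update_self]
      have h2 : i'' (j+1) = t' := by
        rw [hag' (j+1) (Finset.mem_Icc.mpr ⟨by omega, le_refl _⟩), Function.update_self]
      exact hne (by rw [← h1, hrec, h2])
    -- counting
    calc m ^ (b - j) = m * m ^ (b - (j+1)) := by
          rw [← pow_succ']
          congr 1
          omega
      _ ≤ T.card * m ^ (b - (j+1)) := Nat.mul_le_mul_right _ hTcard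
      _ = ∑ _t ∈ T, m ^ (b - (j+1)) := by rw [Finset.sum_const, smul_eq_mul]
      _ ≤ ∑ t ∈ T, (Eset d b q ω (j+1) (Function.update i (j+1) t)).card := by
          refine Finset.sum_le_sum fun t ht => ?_
          exact ih (j+1) (by omega) _ (by omega) (by omega) (hvalup t ht) (hsumup t ht)
      _ = (T.biUnion (fun t => Eset d b q ω (j+1) (Function.update i (j+1) t))).card :=
          (Finset.card_biUnion hdisj).symm
      _ ≤ (Eset d b q ω j i).card := Finset.card_le_card hsub

/-- Deterministic tree-growth step from the proof of Theorem 4.4: if `ω` is a subset of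
the embedded `⌊d/b⌋`-regular tree `𝕋 ⊆ {0,1}^d` of depth `b` such that every vertex of
`𝕋₀ = 𝕋 ∪ {0}` of generation at most `b-1` has at least `m` children in `ω`, then some
neighbor `e_i`, `i ∈ I₁`, of the origin lies in a connected component of `ω` (for the
nearest-neighbor adjacency of `ℤ^d`) with at least `m^{b-1}` vertices. -/
theorem stmt13 (d b m : ℕ) (hd : 3 ≤ d) (hb1 : 1 ≤ b) (hbd : b ≤ d) (hm : 1 ≤ m)
    (ω : Set (Fin d → ℤ))
    (hω : ω ⊆ {x | ∃ j, 1 ≤ j ∧ j ≤ b ∧ ∃ i : ℕ → ℕ,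
      (∀ k ∈ Finset.Icc 1 j, i k ∈ Finset.Icc ((k - 1) * (d / b) + 1) (k * (d / b))) ∧
      x = ∑ k ∈ Finset.Icc 1 j, unitVec d (i k)})
    (hchild : ∀ j : ℕ, j ≤ b - 1 → ∀ i : ℕ → ℕ,
      (∀ k ∈ Finset.Icc 1 j, i k ∈ Finset.Icc ((k - 1) * (d / b) + 1) (k * (d / b))) →
      m ≤ (@Finset.filter _
        (fun t => (∑ k ∈ Finset.Icc 1 j, unitVec d (i k)) + unitVec d t ∈ ω)
        (Classical.decPred _)
        (Finset.Icc (j * (d / b) + 1) ((j + 1) * (d / b)))).card) :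
    ∃ i ∈ Finset.Icc 1 (d / b), ∃ hi : unitVec d i ∈ ω,
      m ^ (b - 1) ≤ {y : Fin d → ℤ | ∃ hy : y ∈ ω,
        (SimpleGraph.induce ω (latticeGraph d)).Reachable
          ⟨unitVec d i, hi⟩ ⟨y, hy⟩}.ncard := by
  classical
  have hq1 : 1 ≤ d / b := (Nat.one_le_div_iff (by omega)).mpr hbd
  have hbdq : b * (d / b) ≤ d := by
    calc b * (d/b) = d/b * b := Nat.mul_comm _ _
      _ ≤ d := Nat.div_mul_le_self d b
  have h0 := hchild 0 (by omega) (fun _ => 0) (by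
    intro k hk
    have := Finset.mem_Icc.mp hk
    omega)
  have hpos := lt_of_lt_of_le hm h0
  obtain ⟨i₁, hi₁⟩ := Finset.card_pos.mp hpos
  rw [Finset.mem_filter] at hi₁
  have hi₁mem : i₁ ∈ Finset.Icc 1 (d/b) := by
    have h := hi₁.1
    simpa using h
  have hi : unitVec d i₁ ∈ ω := by
    have h := hi₁.2
    have he : (Finset.Icc 1 0 : Finset ℕ) = ∅ := Finset.Icc_eq_empty (by omega)
    rw [he, Finset.sum_empty, zero_add] at h
    exact h
  refine ⟨i₁, hi₁mem, hi, ?_⟩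
  set i : ℕ → ℕ := fun _ => i₁ with hidef
  have hval1 : ∀ k ∈ Finset.Icc 1 1, i k ∈ Finset.Icc ((k-1)*(d/b)+1) (k*(d/b)) := by
    intro k hk
    have hk1 : k = 1 := by have := Finset.mem_Icc.mp hk; omega
    subst hk1
    simpa using hi₁.1
  have hsum1 : (∑ k ∈ Finset.Icc 1 1, unitVec d (i k)) = unitVec d i₁ := by
    rw [Finset.Icc_self, Finset.sum_singleton]
  have hkey := key d b m (d/b) ω hb1 hbdq hchild (b-1) 1 (by omega) i (le_refl 1) hb1
    hval1 (by rw [hsum1]; exact hi)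
  have hS01 : {y : Fin d → ℤ | ∃ hy : y ∈ ω,
        (SimpleGraph.induce ω (latticeGraph d)).Reachable ⟨unitVec d i₁, hi⟩ ⟨y, hy⟩}
      ⊆ ↑(Finset.Icc (0 : Fin d → ℤ) 1) := by
    intro y hy
    obtain ⟨hyω, -⟩ := hy
    obtain ⟨j, hj1, hjb, i', hval', hyeq⟩ := hω hyω
    rw [Finset.mem_coe, hyeq]
    exact sum_mem_Icc01 hval'
  have hSfin : {y : Fin d → ℤ | ∃ hy : y ∈ ω,
        (SimpleGraph.induce ω (latticeGraph d)).Reachable ⟨unitVec d i₁, hi⟩ ⟨y, hy⟩}.Finite :=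
    Set.Finite.subset (Finset.finite_toSet _) hS01
  have hsubS : ↑(Eset d b (d/b) ω 1 i) ⊆ {y : Fin d → ℤ | ∃ hy : y ∈ ω,
        (SimpleGraph.induce ω (latticeGraph d)).Reachable ⟨unitVec d i₁, hi⟩ ⟨y, hy⟩} := by
    intro y hy
    rw [Finset.mem_coe, mem_Eset] at hy
    obtain ⟨i', hag, hval', hsums, hyeq⟩ := hy
    have hyb : y ∈ ω := by
      rw [hyeq]; exact hsums b (Finset.mem_Icc.mpr ⟨hb1, le_refl b⟩)
    have hx1 : (∑ k ∈ Finset.Icc 1 1, unitVec d (i' k)) ∈ ω :=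
      hsums 1 (Finset.mem_Icc.mpr ⟨le_refl 1, hb1⟩)
    have hyw : (∑ k ∈ Finset.Icc 1 b, unitVec d (i' k)) ∈ ω := hyeq ▸ hyb
    have hr := reach ω hval' hbdq hsums b hb1 (le_refl b) hx1 hyw
    have e1 : (⟨unitVec d i₁, hi⟩ : ω) = ⟨_, hx1⟩ := Subtype.ext (by
      show unitVec d i₁ = ∑ k ∈ Finset.Icc 1 1, unitVec d (i' k)
      rw [Finset.Icc_self, Finset.sum_singleton,
        hag 1 (Finset.mem_Icc.mpr ⟨le_refl 1, le_refl 1⟩)])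
    have e2 : (⟨y, hyb⟩ : ω) = ⟨_, hyw⟩ := Subtype.ext hyeq
    exact ⟨hyb, by rw [e1, e2]; exact hr⟩
  calc m ^ (b-1) ≤ (Eset d b (d/b) ω 1 i).card := hkey
    _ = (↑(Eset d b (d/b) ω 1 i) : Set (Fin d → ℤ)).ncard := (Set.ncard_coe_finset _).symm
    _ ≤ _ := Set.ncard_le_ncard hsubS hSfin
end

section
/- Let d ≥ 1 be an integer, let c₆ ≥ 3 and N ≥ c₆ be integers, set N₀ = ⌊N/c₆⌋, and let ℓ ∈ (0, 1] be a real number. Suppose E ⊆ ℤ^d is such that there is a nearest-neighbor path with all its vertices in E, whose first vertex is 0 and whose last vertex lies in S₁(0, N·d). Then for every 0 ≤ n < N₀ there exist a point x_n ∈ S₁(0, n·c₆·d) and a self-avoiding nearest-neighbor path π_n of length ⌊ℓ·d⌋ starting at x_n, all of whose vertices lie in E ∩ B₁(0, N·d), such that for all 0 ≤ n < m < N₀ the ℓ¹-distance between the vertex sets of π_n and π_m is at least (c₆ − 2)·d. -/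
lemma norm1_add_le {d : ℕ} (x y : Fin d → ℤ) : norm1 (x + y) ≤ norm1 x + norm1 y := by
  unfold norm1
  rw [← Finset.sum_add_distrib]
  exact Finset.sum_le_sum fun i _ => Int.natAbs_add_le _ _

lemma norm1_neg {d : ℕ} (x : Fin d → ℤ) : norm1 (-x) = norm1 x := by
  unfold norm1
  simp

lemma norm1_tri {d : ℕ} (a b : Fin d → ℤ) : norm1 a ≤ norm1 b + norm1 (a - b) := by
  have h : b + (a - b) = a := by ring
  calc norm1 a = norm1 (b + (a - b)) := by rw [h]
    _ ≤ _ := norm1_add_le _ _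

lemma norm1_sub_comm {d : ℕ} (a b : Fin d → ℤ) : norm1 (a - b) = norm1 (b - a) := by
  have h : a - b = -(b - a) := by ring
  rw [h, norm1_neg]

/-- Discrete intermediate value theorem. -/
lemma ivt_s15 (f : ℕ → ℕ) (n v : ℕ) (hstep : ∀ i < n, f (i + 1) ≤ f i + 1)
    (h0 : f 0 ≤ v) (hn : v ≤ f n) : ∃ i ≤ n, f i = v := by
  induction n with
  | zero => exact ⟨0, le_refl 0, le_antisymm h0 hn⟩
  | succ n ih =>
    by_cases h : v ≤ f n
    · obtain ⟨i, hi, hfi⟩ := ih (fun i hi => hstep i (by omega)) h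
      exact ⟨i, by omega, hfi⟩
    · have h1 := hstep n (by omega)
      exact ⟨n + 1, le_refl _, by omega⟩

/-- Norm bounds along a nearest-neighbor path. -/
lemma steps_bound {d : ℕ} (q : ℕ → Fin d → ℤ) (M : ℕ)
    (h : ∀ i < M, norm1 (q (i + 1) - q i) = 1) :
    ∀ j ≤ M, norm1 (q j) ≤ norm1 (q 0) + j ∧ norm1 (q 0) ≤ norm1 (q j) + j := by
  intro j
  induction j with
  | zero => intro _; omega
  | succ j ih =>
    intro hj
    have h1 := ih (by omega)
    have t1 : norm1 (q (j + 1)) ≤ norm1 (q j) + 1 := by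
      have := norm1_tri (q (j + 1)) (q j)
      rw [h j (by omega)] at this
      exact this
    have t2 : norm1 (q j) ≤ norm1 (q (j + 1)) + 1 := by
      have := norm1_tri (q j) (q (j + 1))
      rw [norm1_sub_comm, h j (by omega)] at this
      exact this
    omega

/-- A minimal-length walk in `E` from a point of norm `v` to norm at least `v + L`
yields a self-avoiding path of length `L` started at norm `v`. -/
lemma key_s15 {d : ℕ} (E : Set (Fin d → ℤ)) (p : ℕ → Fin d → ℤ) (np : ℕ)
    (hsteps : ∀ i < np, norm1 (p (i + 1) - p i) = 1)
    (hmem : ∀ i ≤ np, p i ∈ E)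
    (v L : ℕ) (hstart : ∃ i₀ ≤ np, norm1 (p i₀) = v)
    (hend : v + L ≤ norm1 (p np)) :
    ∃ q : ℕ → Fin d → ℤ, norm1 (q 0) = v ∧
      (∀ i < L, norm1 (q (i + 1) - q i) = 1) ∧
      (∀ i ≤ L, q i ∈ E) ∧
      (∀ i ≤ L, ∀ j ≤ L, q i = q j → i = j) := by
  classical
  obtain ⟨i₀, hi₀, hvi₀⟩ := hstart
  set P : ℕ → Prop := fun M => ∃ q : ℕ → Fin d → ℤ,
    (∀ i < M, norm1 (q (i + 1) - q i) = 1) ∧ (∀ i ≤ M, q i ∈ E) ∧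
    norm1 (q 0) = v ∧ v + L ≤ norm1 (q M) with hP
  have hex : ∃ M, P M := by
    refine ⟨np - i₀, fun i => p (i₀ + i), ?_, ?_, ?_, ?_⟩
    · intro i hi
      show norm1 (p (i₀ + (i + 1)) - p (i₀ + i)) = 1
      rw [show i₀ + (i + 1) = (i₀ + i) + 1 from by omega]
      exact hsteps (i₀ + i) (by omega)
    · intro i hi
      exact hmem (i₀ + i) (by omega)
    · simpa using hvi₀
    · show v + L ≤ norm1 (p (i₀ + (np - i₀)))
      rw [show i₀ + (np - i₀) = np from by omega]
      exact hend
  obtain ⟨M₀, ⟨q, hqsteps, hqmem, hq0, hqend⟩, hmin⟩ :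
      ∃ M₀, P M₀ ∧ ∀ M < M₀, ¬ P M :=
    ⟨Nat.find hex, Nat.find_spec hex, fun M h => Nat.find_min hex h⟩
  have hML : L ≤ M₀ := by
    have := (steps_bound q M₀ hqsteps M₀ le_rfl).1
    omega
  have hinj : ∀ a b, a < b → b ≤ M₀ → q a ≠ q b := by
    intro a b hab hbM heq
    set k := b - a with hk
    apply hmin (M₀ - k) (by omega)
    refine ⟨fun i => if i ≤ a then q i else q (i + k), ?_, ?_, ?_, ?_⟩
    · intro i hi
      show norm1 ((if i + 1 ≤ a then q (i + 1) else q (i + 1 + k)) -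
        (if i ≤ a then q i else q (i + k))) = 1
      by_cases hia : i + 1 ≤ a
      · simp only [if_pos hia, if_pos (by omega : i ≤ a)]
        exact hqsteps i (by omega)
      · have e1 : (if i + 1 ≤ a then q (i + 1) else q (i + 1 + k)) = q ((i + k) + 1) := by
          rw [if_neg hia, show i + 1 + k = (i + k) + 1 from by omega]
        have e2 : (if i ≤ a then q i else q (i + k)) = q (i + k) := by
          by_cases hia2 : i ≤ a
          · have : i = a := by omega
            rw [if_pos hia2, this, heq, show a + k = b from by omega]
          · rw [if_neg hia2]
        rw [e1, e2]
        exact hqsteps (i + k) (by omega)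
    · intro i hi
      show (if i ≤ a then q i else q (i + k)) ∈ E
      by_cases hia : i ≤ a
      · rw [if_pos hia]; exact hqmem i (by omega)
      · rw [if_neg hia]; exact hqmem (i + k) (by omega)
    · show norm1 (if 0 ≤ a then q 0 else q (0 + k)) = v
      rw [if_pos (Nat.zero_le a)]; exact hq0
    · have e : (if M₀ - k ≤ a then q (M₀ - k) else q (M₀ - k + k)) = q M₀ := by
        by_cases hc : M₀ - k ≤ a
        · have h1 : M₀ - k = a := by omega
          have h2 : b = M₀ := by omega
          rw [if_pos hc, h1, heq, h2]
        · rw [if_neg hc, show M₀ - k + k = M₀ from by omega]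
      show v + L ≤ norm1 (if M₀ - k ≤ a then q (M₀ - k) else q (M₀ - k + k))
      rw [e]
      exact hqend
  refine ⟨q, hq0, fun i hi => hqsteps i (by omega), fun i hi => hqmem i (by omega), ?_⟩
  intro i hi j hj heq
  rcases lt_trichotomy i j with h | h | h
  · exact absurd heq (hinj i j h (by omega))
  · exact h
  · exact absurd heq.symm (hinj j i h (by omega))

/-- Extraction of well-separated local traces (displays (3.19), (3.22), Figure 2):
a nearest-neighbor path in `E` from `0` to `S₁(0, Nd)` yields, for each `n < N₀ = ⌊N/c₆⌋`,
a self-avoiding path `π_n` of length `⌊ℓd⌋` in `E ∩ B₁(0, Nd)` started on `S₁(0, n c₆ d)`,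
the paths being pairwise at `ℓ¹`-distance at least `(c₆ - 2)d`. -/
theorem stmt15 (d c₆ N : ℕ) (hd : 1 ≤ d) (hc₆ : 3 ≤ c₆) (hN : c₆ ≤ N)
    (ℓ : ℝ) (hℓ0 : 0 < ℓ) (hℓ1 : ℓ ≤ 1)
    (E : Set (Fin d → ℤ))
    (hpath : ∃ (p : ℕ → (Fin d → ℤ)) (n : ℕ), IsNNPathIn E p n ∧
      p 0 = 0 ∧ norm1 (p n) = N * d) :
    ∃ π : ℕ → ℕ → (Fin d → ℤ),
      (∀ n < N / c₆,
        norm1 (π n 0) = n * c₆ * d ∧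
        (∀ i < ⌊ℓ * (d : ℝ)⌋₊, norm1 (π n (i + 1) - π n i) = 1) ∧
        (∀ i ≤ ⌊ℓ * (d : ℝ)⌋₊, π n i ∈ E ∧ norm1 (π n i) ≤ N * d) ∧
        (∀ i ≤ ⌊ℓ * (d : ℝ)⌋₊, ∀ j ≤ ⌊ℓ * (d : ℝ)⌋₊, π n i = π n j → i = j)) ∧
      ∀ n m, n < m → m < N / c₆ →
        ∀ i ≤ ⌊ℓ * (d : ℝ)⌋₊, ∀ j ≤ ⌊ℓ * (d : ℝ)⌋₊,
          (c₆ - 2) * d ≤ norm1 (π n i - π m j) := by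
  classical
  obtain ⟨p, np, ⟨hsteps, hmem⟩, hp0, hpn⟩ := hpath
  set L := ⌊ℓ * (d : ℝ)⌋₊ with hLdef
  have hLd : L ≤ d := by
    have h1 : ℓ * (d : ℝ) ≤ (d : ℝ) := by nlinarith [Nat.cast_nonneg (α := ℝ) d]
    calc L ≤ ⌊(d : ℝ)⌋₊ := Nat.floor_le_floor h1
      _ = d := Nat.floor_natCast d
  have hstepnorm : ∀ i < np, norm1 (p (i + 1)) ≤ norm1 (p i) + 1 := by
    intro i hi
    have := norm1_tri (p (i + 1)) (p i)
    rw [hsteps i hi] at this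
    exact this
  have hivt : ∀ v ≤ N * d, ∃ i ≤ np, norm1 (p i) = v := by
    intro v hv
    apply ivt_s15 (fun i => norm1 (p i)) np v hstepnorm
    · simp [hp0, norm1]
    · rw [hpn]; exact hv
  have hbound : ∀ n', n' < N / c₆ → n' * c₆ * d + L ≤ N * d := by
    intro n' hn'
    have h1 : (n' + 1) * c₆ ≤ N := (Nat.le_div_iff_mul_le (by omega)).mp hn'
    have h2 : (n' + 1) * c₆ * d ≤ N * d := mul_le_mul_left h1 d
    have h3 : (n' + 1) * c₆ * d = n' * c₆ * d + c₆ * d := by ring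
    have h4 : d ≤ c₆ * d := Nat.le_mul_of_pos_left d (by omega)
    omega
  have main : ∀ n' : ℕ, ∃ q : ℕ → Fin d → ℤ, n' < N / c₆ →
      norm1 (q 0) = n' * c₆ * d ∧ (∀ i < L, norm1 (q (i + 1) - q i) = 1) ∧
      (∀ i ≤ L, q i ∈ E) ∧ (∀ i ≤ L, ∀ j ≤ L, q i = q j → i = j) := by
    intro n'
    by_cases h : n' < N / c₆
    · obtain ⟨q, hq⟩ := key_s15 E p np hsteps hmem (n' * c₆ * d) L
        (hivt _ (by have := hbound n' h; omega)) (by rw [hpn]; exact hbound n' h)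
      exact ⟨q, fun _ => hq⟩
    · exact ⟨fun _ => 0, fun hh => absurd hh h⟩
  choose π hπ using main
  refine ⟨π, ?_, ?_⟩
  · intro n hn
    obtain ⟨h0, hst, hm, hinj⟩ := hπ n hn
    refine ⟨h0, hst, ?_, hinj⟩
    intro i hi
    refine ⟨hm i hi, ?_⟩
    have hb := (steps_bound (π n) L hst i hi).1
    have := hbound n hn
    omega
  · intro n m hnm hmN i hi j hj
    obtain ⟨h0n, hstn, _, _⟩ := hπ n (hnm.trans hmN)
    obtain ⟨h0m, hstm, _, _⟩ := hπ m hmN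
    have b1 := (steps_bound (π n) L hstn i hi).1
    have b2 := (steps_bound (π m) L hstm j hj).2
    have tri := norm1_tri (π m j) (π n i)
    have hsym : norm1 (π m j - π n i) = norm1 (π n i - π m j) := norm1_sub_comm _ _
    rw [hsym] at tri
    have e1 : (n + 1) * c₆ * d = n * c₆ * d + c₆ * d := by ring
    have e2 : (n + 1) * c₆ * d ≤ m * c₆ * d :=
      mul_le_mul_left (mul_le_mul_left hnm c₆) d
    have e3 : (c₆ - 2) * d + 2 * d = c₆ * d := by
      have h : c₆ - 2 + 2 = c₆ := by omega
      calc (c₆ - 2) * d + 2 * d = (c₆ - 2 + 2) * d := by ring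
        _ = c₆ * d := by rw [h]
    omega
end
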